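/- Let a > 0 and let φ ∈ C([−1,0]) satisfy φ(t) < 0 for t ∈ [−1,0) and φ(0) = 0. If x : [−1,∞) → ℝ is a solution of the relay equation ẋ(t) = R(x(t−1)) with initial function φ, then x(t) = x0(t) for all t ≥ 0, where x0 is the T0-periodic function with x0(t) = t on [0,1], x0(t) = −a(t − t0) on [1, t0+1], x0(t) = t − T0 on [t0+1, T0]. -/

import Mathlib

/-- The relay nonlinearity: `R a x = 1` if `x ≤ 0`, and `R a x = -a` if `x > 0`. -/
noncomputable def R (a x : ℝ) : ℝ := if x ≤ 0 then 1 else -a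

/-- `x : [-1,∞) → ℝ` is a solution of the relay equation `x'(t) = R a (x (t-1))`
with initial function `φ ∈ C([-1,0])`: `x` is continuous on `[-1,∞)`, coincides
with `φ` on `[-1,0]`, and for every `t > 0` outside an exceptional set having
finitely many points in each bounded interval, `x` is differentiable at `t` with
`x'(t) = R a (x (t-1))`. -/
def IsSolution (a : ℝ) (φ x : ℝ → ℝ) : Prop :=
  ContinuousOn x (Set.Ici (-1 : ℝ)) ∧
  (∀ t ∈ Set.Icc (-1 : ℝ) 0, x t = φ t) ∧
  ∃ S : Set ℝ, (∀ A B : ℝ, (S ∩ Set.Icc A B).Finite) ∧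
    ∀ t : ℝ, 0 < t → t ∉ S → HasDerivAt x (R a (x (t - 1))) t

/-- a solution with a negative initial function vanishing at `0`
coincides with the `T0`-periodic function `x0` for all `t ≥ 0`. -/

private lemma eq_linear_aux {x : ℝ → ℝ} {S : Set ℝ} {c : ℝ} :
    ∀ (n : ℕ) (α β : ℝ), α < β → (S ∩ Set.Ioo α β).Finite →
    (S ∩ Set.Ioo α β).ncard ≤ n → ContinuousOn x (Set.Icc α β) →
    (∀ t ∈ Set.Ioo α β, t ∉ S → HasDerivAt x c t) →
    x β = x α + c * (β - α) := by
  intro n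
  induction n with
  | zero =>
    intro α β hab hfin hcard hcont hd
    have hempty : S ∩ Set.Ioo α β = ∅ := by
      rw [← Set.ncard_eq_zero hfin]; omega
    have hd' : ∀ t ∈ Set.Ioo α β, HasDerivAt x c t := by
      intro t ht
      refine hd t ht (fun hts => ?_)
      have : t ∈ S ∩ Set.Ioo α β := ⟨hts, ht⟩
      rw [hempty] at this; exact this
    obtain ⟨p, hp, hslope⟩ := exists_hasDerivAt_eq_slope x (fun _ => c) hab hcont hd'
    have hne : β - α ≠ 0 := sub_ne_zero.mpr (ne_of_gt hab)
    rw [eq_div_iff hne] at hslope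
    linarith [hslope]
  | succ n ih =>
    intro α β hab hfin hcard hcont hd
    rcases Set.eq_empty_or_nonempty (S ∩ Set.Ioo α β) with hempty | ⟨s, hsS, hs⟩
    · have hd' : ∀ t ∈ Set.Ioo α β, HasDerivAt x c t := by
        intro t ht
        refine hd t ht (fun hts => ?_)
        have : t ∈ S ∩ Set.Ioo α β := ⟨hts, ht⟩
        rw [hempty] at this; exact this
      obtain ⟨p, hp, hslope⟩ := exists_hasDerivAt_eq_slope x (fun _ => c) hab hcont hd'
      have hne : β - α ≠ 0 := sub_ne_zero.mpr (ne_of_gt hab)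
      rw [eq_div_iff hne] at hslope
      linarith [hslope]
    · have hsub1 : S ∩ Set.Ioo α s ⊆ (S ∩ Set.Ioo α β) \ {s} := by
        rintro t ⟨htS, ht⟩
        exact ⟨⟨htS, ht.1, ht.2.trans hs.2⟩, by simp [ne_of_lt ht.2]⟩
      have hsub2 : S ∩ Set.Ioo s β ⊆ (S ∩ Set.Ioo α β) \ {s} := by
        rintro t ⟨htS, ht⟩
        exact ⟨⟨htS, hs.1.trans ht.1, ht.2⟩, by simp [(ne_of_lt ht.1).symm]⟩
      have hdifffin : ((S ∩ Set.Ioo α β) \ {s}).Finite := hfin.diff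
      have hdiffcard : ((S ∩ Set.Ioo α β) \ {s}).ncard < (S ∩ Set.Ioo α β).ncard :=
        Set.ncard_diff_singleton_lt_of_mem ⟨hsS, hs⟩ hfin
      have h1 := ih α s hs.1 (hdifffin.subset hsub1)
        (le_trans (Set.ncard_le_ncard hsub1 hdifffin) (by omega))
        (hcont.mono (Set.Icc_subset_Icc_right hs.2.le))
        (fun t ht hts => hd t ⟨ht.1, ht.2.trans hs.2⟩ hts)
      have h2 := ih s β hs.2 (hdifffin.subset hsub2)
        (le_trans (Set.ncard_le_ncard hsub2 hdifffin) (by omega))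
        (hcont.mono (Set.Icc_subset_Icc_left hs.1.le))
        (fun t ht hts => hd t ⟨hs.1.trans ht.1, ht.2⟩ hts)
      rw [h2, h1]; ring

private lemma eq_linear {x : ℝ → ℝ} {S : Set ℝ}
    (hS : ∀ A B : ℝ, (S ∩ Set.Icc A B).Finite) {c α β : ℝ} (hαβ : α ≤ β)
    (hcont : ContinuousOn x (Set.Icc α β))
    (hd : ∀ t ∈ Set.Ioo α β, t ∉ S → HasDerivAt x c t) :
    ∀ t ∈ Set.Icc α β, x t = x α + c * (t - α) := by
  intro t ht
  rcases eq_or_lt_of_le ht.1 with he | hlt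
  · rw [← he]; ring
  · have hfin : (S ∩ Set.Ioo α t).Finite :=
      (hS α β).subset (fun u hu => ⟨hu.1, hu.2.1.le, hu.2.2.le.trans ht.2⟩)
    exact eq_linear_aux (S ∩ Set.Ioo α t).ncard α t hlt hfin le_rfl
      (hcont.mono (Set.Icc_subset_Icc_right ht.2))
      (fun u hu hus => hd u ⟨hu.1, lt_of_lt_of_le hu.2 ht.2⟩ hus)


private lemma period_step (a t0 T0 : ℝ) (ha : 0 < a) (ht0 : a * t0 = a + 1)
    (hT0 : T0 = t0 + 1 + a)
    (x : ℝ → ℝ) (hcont : ContinuousOn x (Set.Ici (-1 : ℝ))) (S : Set ℝ)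
    (hS : ∀ A B : ℝ, (S ∩ Set.Icc A B).Finite)
    (heq : ∀ t : ℝ, 0 < t → t ∉ S → HasDerivAt x (R a (x (t - 1))) t)
    (b : ℝ) (hb : 0 ≤ b) (hneg : ∀ s ∈ Set.Ico (b - 1) b, x s < 0) (hxb : x b = 0) :
    (∀ t ∈ Set.Icc b (b + 1), x t = t - b) ∧
    (∀ t ∈ Set.Icc (b + 1) (b + t0 + 1), x t = -a * (t - b - t0)) ∧
    (∀ t ∈ Set.Icc (b + t0 + 1) (b + T0), x t = t - b - T0) := by
  have ht0gt1 : 1 < t0 := by nlinarith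
  -- Step A : slope 1 on [b, b+1]
  have hA0 : ∀ t ∈ Set.Icc b (b + 1), x t = x b + 1 * (t - b) := by
    refine eq_linear hS (by linarith) (hcont.mono (fun y hy => by
      simp only [Set.mem_Icc] at hy; simp only [Set.mem_Ici]; linarith [hy.1])) ?_
    intro t ht htS
    have h1 : x (t - 1) < 0 := hneg _ ⟨by linarith [ht.1], by linarith [ht.2]⟩
    have h2 : R a (x (t - 1)) = 1 := if_pos h1.le
    have := heq t (by linarith [ht.1]) htS
    rwa [h2] at this
  have hA : ∀ t ∈ Set.Icc b (b + 1), x t = t - b := by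
    intro t ht; rw [hA0 t ht, hxb]; ring
  -- Step B : slope -a on [b+1, b+t0+1]
  have hxb1 : x (b + 1) = 1 := by
    rw [hA (b + 1) ⟨by linarith, le_refl _⟩]; ring
  set E : Set ℝ := {T | T ∈ Set.Icc (b + 1) (b + t0 + 1) ∧
      ∀ t ∈ Set.Icc (b + 1) T, x t = -a * (t - b - t0)} with hE
  have hbase : b + 1 ∈ E := by
    refine ⟨⟨le_refl _, by linarith⟩, ?_⟩
    intro t ht
    have : t = b + 1 := le_antisymm ht.2 ht.1
    rw [this, hxb1]; linear_combination -ht0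
  have hEbdd : BddAbove E := ⟨b + t0 + 1, fun T hT => hT.1.2⟩
  have hEne : E.Nonempty := ⟨b + 1, hbase⟩
  set m := sSup E with hm
  have hm1 : b + 1 ≤ m := le_csSup hEbdd hbase
  have hm2 : m ≤ b + t0 + 1 := csSup_le hEne (fun T hT => hT.1.2)
  have hknown : ∀ t ∈ Set.Ico (b + 1) m, x t = -a * (t - b - t0) := by
    intro t ht
    obtain ⟨T, hTE, hTt⟩ := exists_lt_of_lt_csSup hEne ht.2
    exact hTE.2 t ⟨ht.1, hTt.le⟩
  have hpos : ∀ s : ℝ, b < s → s < m → s < b + t0 → 0 < x s := by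
    intro s h1 h2 h3
    rcases le_or_gt s (b + 1) with h | h
    · rw [hA s ⟨h1.le, h⟩]; linarith
    · rw [hknown s ⟨h.le, h2⟩]
      nlinarith [mul_pos ha (show (0:ℝ) < b + t0 - s by linarith)]
  have hmEicc : ∀ t ∈ Set.Icc (b + 1) m, x t = -a * (t - b - t0) := by
    rcases eq_or_lt_of_le hm1 with he | hlt
    · intro t ht; rw [← he] at ht; exact hbase.2 t ht
    · have hlin := eq_linear hS (le_of_lt hlt) (hcont.mono (fun y hy => by
        simp only [Set.mem_Icc] at hy; simp only [Set.mem_Ici]; linarith [hy.1]))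
        (c := -a) ?_
      · intro t ht
        rw [hlin t ht, hxb1]; linear_combination -ht0
      · intro t ht htS
        have hspos := hpos (t - 1) (by linarith [ht.1]) (by linarith [ht.2])
          (by linarith [ht.2, hm2])
        have h2 : R a (x (t - 1)) = -a := if_neg (not_le.mpr hspos)
        have := heq t (by linarith [ht.1]) htS
        rwa [h2] at this
  have hmtop : m = b + t0 + 1 := by
    by_contra hne
    have hlt : m < b + t0 + 1 := lt_of_le_of_ne hm2 hne
    set δ := min 1 (b + t0 + 1 - m) with hδdef
    have hδ : 0 < δ := lt_min one_pos (by linarith)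
    have hδ1 : δ ≤ 1 := min_le_left _ _
    have hδ2 : δ ≤ b + t0 + 1 - m := min_le_right _ _
    have hlin := eq_linear hS (show m ≤ m + δ by linarith) (hcont.mono (fun y hy => by
      simp only [Set.mem_Icc] at hy; simp only [Set.mem_Ici]; linarith [hy.1]))
      (c := -a) ?_
    · have hT : m + δ ∈ E := by
        refine ⟨⟨by linarith, by linarith⟩, ?_⟩
        intro t ht
        rcases le_or_gt t m with h | h
        · exact hmEicc t ⟨ht.1, h⟩
        · have h3 := hlin t ⟨h.le, ht.2⟩
          rw [hmEicc m ⟨hm1, le_refl m⟩] at h3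
          rw [h3]; ring
      have := le_csSup hEbdd hT
      linarith
    · intro t ht htS
      have hspos := hpos (t - 1) (by linarith [ht.1]) (by linarith [ht.2])
        (by linarith [ht.2])
      have h2 : R a (x (t - 1)) = -a := if_neg (not_le.mpr hspos)
      have := heq t (by linarith [ht.1]) htS
      rwa [h2] at this
  have hB : ∀ t ∈ Set.Icc (b + 1) (b + t0 + 1), x t = -a * (t - b - t0) := by
    intro t ht; exact hmEicc t (by rw [hmtop]; exact ht)
  -- Step C : slope 1 on [b+t0+1, b+T0]
  have hxc0 : x (b + t0 + 1) = (b + t0 + 1) - b - T0 := by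
    rw [hB (b + t0 + 1) ⟨by linarith, le_refl _⟩]; rw [hT0]; ring
  set F : Set ℝ := {T | T ∈ Set.Icc (b + t0 + 1) (b + T0) ∧
      ∀ t ∈ Set.Icc (b + t0 + 1) T, x t = t - b - T0} with hF
  have hfbase : b + t0 + 1 ∈ F := by
    refine ⟨⟨le_refl _, by rw [hT0]; linarith⟩, ?_⟩
    intro t ht
    have : t = b + t0 + 1 := le_antisymm ht.2 ht.1
    rw [this]; exact hxc0
  have hFbdd : BddAbove F := ⟨b + T0, fun T hT => hT.1.2⟩
  have hFne : F.Nonempty := ⟨b + t0 + 1, hfbase⟩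
  set m' := sSup F with hm'
  have hn1 : b + t0 + 1 ≤ m' := le_csSup hFbdd hfbase
  have hn2 : m' ≤ b + T0 := csSup_le hFne (fun T hT => hT.1.2)
  have hknown' : ∀ t ∈ Set.Ico (b + t0 + 1) m', x t = t - b - T0 := by
    intro t ht
    obtain ⟨T, hTE, hTt⟩ := exists_lt_of_lt_csSup hFne ht.2
    exact hTE.2 t ⟨ht.1, hTt.le⟩
  have hnegx : ∀ s : ℝ, b + t0 < s → s < m' → x s ≤ 0 := by
    intro s h1 h2
    rcases le_or_gt s (b + t0 + 1) with h | h
    · rw [hB s ⟨by linarith, h⟩]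
      nlinarith [mul_pos ha (show (0:ℝ) < s - b - t0 by linarith)]
    · rw [hknown' s ⟨h.le, h2⟩]; linarith
  have hmFicc : ∀ t ∈ Set.Icc (b + t0 + 1) m', x t = t - b - T0 := by
    rcases eq_or_lt_of_le hn1 with he | hlt
    · intro t ht; rw [← he] at ht; exact hfbase.2 t ht
    · have hlin := eq_linear hS (le_of_lt hlt) (hcont.mono (fun y hy => by
        simp only [Set.mem_Icc] at hy; simp only [Set.mem_Ici]; linarith [hy.1]))
        (c := 1) ?_
      · intro t ht
        rw [hlin t ht, hxc0]; ring
      · intro t ht htS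
        have hsneg := hnegx (t - 1) (by linarith [ht.1]) (by linarith [ht.2])
        have h2 : R a (x (t - 1)) = 1 := if_pos hsneg
        have := heq t (by linarith [ht.1]) htS
        rwa [h2] at this
  have hmtop' : m' = b + T0 := by
    by_contra hne
    have hlt : m' < b + T0 := lt_of_le_of_ne hn2 hne
    set δ := min 1 (b + T0 - m') with hδdef
    have hδ : 0 < δ := lt_min one_pos (by linarith)
    have hδ1 : δ ≤ 1 := min_le_left _ _
    have hδ2 : δ ≤ b + T0 - m' := min_le_right _ _
    have hlin := eq_linear hS (show m' ≤ m' + δ by linarith) (hcont.mono (fun y hy => by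
      simp only [Set.mem_Icc] at hy; simp only [Set.mem_Ici]; linarith [hy.1]))
      (c := 1) ?_
    · have hT : m' + δ ∈ F := by
        refine ⟨⟨by linarith, by linarith⟩, ?_⟩
        intro t ht
        rcases le_or_gt t m' with h | h
        · exact hmFicc t ⟨ht.1, h⟩
        · have h3 := hlin t ⟨h.le, ht.2⟩
          rw [hmFicc m' ⟨hn1, le_refl m'⟩] at h3
          rw [h3]; ring
      have := le_csSup hFbdd hT
      linarith
    · intro t ht htS
      have hsneg : x (t - 1) ≤ 0 := by
        rcases le_or_gt (t - 1) (b + t0 + 1) with h | h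
        · rw [hB (t - 1) ⟨by linarith [ht.1], h⟩]
          nlinarith [mul_pos ha (show (0:ℝ) < (t - 1) - b - t0 by linarith [ht.1])]
        · rw [hmFicc (t - 1) ⟨h.le, by linarith [ht.2]⟩]; linarith [ht.2]
      have h2 : R a (x (t - 1)) = 1 := if_pos hsneg
      have := heq t (by linarith [ht.1]) htS
      rwa [h2] at this
  have hC : ∀ t ∈ Set.Icc (b + t0 + 1) (b + T0), x t = t - b - T0 := by
    intro t ht; exact hmFicc t (by rw [hmtop']; exact ht)
  exact ⟨hA, hB, hC⟩

theorem stmt_1 (a : ℝ) (ha : 0 < a) (t0 T0 : ℝ)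
    (ht0 : t0 = (a + 1) / a) (hT0 : T0 = (a + 1) ^ 2 / a)
    (φ : ℝ → ℝ) (hφc : ContinuousOn φ (Set.Icc (-1 : ℝ) 0))
    (hφneg : ∀ t ∈ Set.Ico (-1 : ℝ) 0, φ t < 0) (hφ0 : φ 0 = 0)
    (x : ℝ → ℝ) (hx : IsSolution a φ x)
    (x0 : ℝ → ℝ)
    (hx0per : ∀ t : ℝ, x0 (t + T0) = x0 t)
    (hx0a : ∀ t ∈ Set.Icc (0 : ℝ) 1, x0 t = t)
    (hx0b : ∀ t ∈ Set.Icc (1 : ℝ) (t0 + 1), x0 t = -a * (t - t0))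
    (hx0c : ∀ t ∈ Set.Icc (t0 + 1) T0, x0 t = t - T0) :
    ∀ t : ℝ, 0 ≤ t → x t = x0 t := by
  obtain ⟨hxc, hxφ, S, hSfin, heq⟩ := hx
  have ha' : a ≠ 0 := ne_of_gt ha
  have ht0' : a * t0 = a + 1 := by rw [ht0]; field_simp
  have hT0' : T0 = t0 + 1 + a := by rw [hT0, ht0]; field_simp; ring
  have ht0gt1 : 1 < t0 := by nlinarith
  have hT0pos : 0 < T0 := by
    rw [hT0]; exact div_pos (pow_pos (by linarith) 2) ha
  -- one-period step
  have step : ∀ b : ℝ, 0 ≤ b → (∀ s ∈ Set.Ico (b - 1) b, x s < 0) → x b = 0 →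
      (∀ t ∈ Set.Icc b (b + T0), x t = x0 (t - b)) ∧
      (∀ s ∈ Set.Ico (b + T0 - 1) (b + T0), x s < 0) ∧ x (b + T0) = 0 := by
    intro b hb hneg hxb
    obtain ⟨hA, hB, hC⟩ := period_step a t0 T0 ha ht0' hT0' x hxc S hSfin heq b hb hneg hxb
    refine ⟨?_, ?_, ?_⟩
    · intro t ht
      rcases le_or_gt t (b + 1) with h | h
      · rw [hA t ⟨ht.1, h⟩, hx0a (t - b) ⟨by linarith [ht.1], by linarith⟩]
      rcases le_or_gt t (b + t0 + 1) with h2 | h2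
      · rw [hB t ⟨by linarith, h2⟩, hx0b (t - b) ⟨by linarith, by linarith⟩]
      · rw [hC t ⟨by linarith, ht.2⟩, hx0c (t - b) ⟨by linarith, by linarith [ht.2]⟩]
    · intro s hs
      have hs1 : b + t0 + a ≤ s := by rw [hT0'] at hs; linarith [hs.1]
      rcases le_or_gt s (b + t0 + 1) with h | h
      · rw [hB s ⟨by linarith, h⟩]
        nlinarith [mul_pos ha (show (0:ℝ) < s - b - t0 by linarith)]
      · rw [hC s ⟨by linarith, (hs.2).le⟩]; linarith [hs.2]
    · rw [hC (b + T0) ⟨by rw [hT0']; linarith, le_refl _⟩]; ring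
  -- periodic shift of x0
  have hshift : ∀ (n : ℕ) (t : ℝ), x0 (t + n * T0) = x0 t := by
    intro n
    induction n with
    | zero => intro t; norm_num
    | succ n ih =>
      intro t
      have hc : ((n + 1 : ℕ) : ℝ) * T0 = (n : ℝ) * T0 + T0 := by push_cast; ring
      rw [hc, ← add_assoc, show t + (n:ℝ)*T0 + T0 = (t + (n:ℝ)*T0) + T0 from rfl,
        hx0per, ih]
  -- induction on periods
  have main : ∀ n : ℕ,
      (∀ s ∈ Set.Ico ((n : ℝ) * T0 - 1) ((n : ℝ) * T0), x s < 0) ∧ x ((n : ℝ) * T0) = 0 := by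
    intro n
    induction n with
    | zero =>
      constructor
      · intro s hs
        simp only [Nat.cast_zero, zero_mul, zero_sub] at hs
        rw [hxφ s ⟨hs.1, hs.2.le⟩]
        exact hφneg s hs
      · simp only [Nat.cast_zero, zero_mul]
        rw [hxφ 0 ⟨by norm_num, le_refl 0⟩, hφ0]
    | succ n ih =>
      have hbn : (0:ℝ) ≤ (n : ℝ) * T0 :=
        mul_nonneg (Nat.cast_nonneg n) hT0pos.le
      obtain ⟨-, h2, h3⟩ := step ((n : ℝ) * T0) hbn ih.1 ih.2
      have hc : ((n + 1 : ℕ) : ℝ) * T0 = (n : ℝ) * T0 + T0 := by push_cast; ring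
      rw [hc]
      exact ⟨h2, h3⟩
  intro t ht
  set n := ⌊t / T0⌋₊ with hn
  have h1 : (n : ℝ) * T0 ≤ t := by
    have h := Nat.floor_le (show 0 ≤ t / T0 from div_nonneg ht hT0pos.le)
    have := mul_le_mul_of_nonneg_right h hT0pos.le
    rwa [div_mul_cancel₀ t (ne_of_gt hT0pos)] at this
  have h2 : t ≤ (n : ℝ) * T0 + T0 := by
    have h := Nat.lt_floor_add_one (t / T0)
    have := mul_lt_mul_of_pos_right h hT0pos
    rw [div_mul_cancel₀ t (ne_of_gt hT0pos)] at this
    nlinarith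
  have hbn : (0:ℝ) ≤ (n : ℝ) * T0 := mul_nonneg (Nat.cast_nonneg n) hT0pos.le
  obtain ⟨hform, -, -⟩ := step ((n : ℝ) * T0) hbn (main n).1 (main n).2
  rw [hform t ⟨h1, h2⟩]
  have := hshift n (t - (n : ℝ) * T0)
  rw [sub_add_cancel] at this; exact this.symm
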